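/- (Tridiagonal growth bound for transition amplitudes.) Consider the bilinear system ψ' = (A + u(t)B)ψ where A is skew-adjoint diagonal and B is skew-adjoint and tridiagonal with respect to the eigenbasis (φ_k)_{k≥1} of A (i.e. ⟨φ_j, Bφ_k⟩ = 0 if |j−k| > 1) with |⟨φ_j, Bφ_k⟩| ≤ 1/2 for all j,k. Then for every locally integrable control u and every t ≥ 0 and k ≥ 1, |⟨φ_{k+1}, Υ^u_t φ_1⟩| ≤ (1/k!)(∫₀^t |u(τ)|dτ)^k. -/

import Mathlib

open scoped InnerProductSpace
open MeasureTheory intervalIntegral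
open Filter Topology

lemma aux_sum_pow (n m : ℕ) :
    ∑ i ∈ Finset.range m, ((i : ℝ) + 1) ^ n ≤ ((m : ℝ) + 1) ^ (n + 1) / (n + 1) := by
  have key : ∀ i : ℕ, ((i : ℝ) + 1) ^ n
      ≤ (((i : ℝ) + 2) ^ (n + 1) - ((i : ℝ) + 1) ^ (n + 1)) / (n + 1) := by
    intro i
    have h1 : ((i : ℝ) + 1) ≤ (i : ℝ) + 2 := by linarith
    have h2 : (∫ x in ((i : ℝ) + 1)..((i : ℝ) + 2), ((i : ℝ) + 1) ^ n)
        ≤ ∫ x in ((i : ℝ) + 1)..((i : ℝ) + 2), x ^ n := by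
      apply integral_mono_on h1 (intervalIntegrable_const) ((continuous_pow n).intervalIntegrable _ _)
      intro x hx
      exact pow_le_pow_left₀ (by linarith [hx.1]) hx.1 n
    rw [integral_pow] at h2
    simp only [intervalIntegral.integral_const, smul_eq_mul] at h2
    have : ((i : ℝ) + 2 - ((i : ℝ) + 1)) * ((i : ℝ) + 1) ^ n = ((i : ℝ) + 1) ^ n := by ring
    rw [this] at h2
    exact h2
  calc ∑ i ∈ Finset.range m, ((i : ℝ) + 1) ^ n
      ≤ ∑ i ∈ Finset.range m, ((((i : ℝ) + 2) ^ (n + 1) - ((i : ℝ) + 1) ^ (n + 1)) / (n + 1)) :=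
        Finset.sum_le_sum fun i _ => key i
    _ = (∑ i ∈ Finset.range m, ((((i : ℝ) + 1) + 1) ^ (n + 1) - ((i : ℝ) + 1) ^ (n + 1))) / (n + 1) := by
        rw [← Finset.sum_div]; congr 1; apply Finset.sum_congr rfl; intro i _; ring_nf
    _ = (((m : ℝ) + 1) ^ (n + 1) - 1) / (n + 1) := by
        have := Finset.sum_range_sub (f := fun i : ℕ => ((i : ℝ) + 1) ^ (n + 1)) m
        simp only [Nat.cast_add, Nat.cast_one] at this
        rw [this]; norm_num
    _ ≤ ((m : ℝ) + 1) ^ (n + 1) / (n + 1) := by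
        gcongr
        linarith


lemma aux_iter (w : ℝ → ℝ) (hw : ∀ a b : ℝ, IntervalIntegrable w volume a b)
    (hw0 : ∀ s, 0 ≤ w s) (n : ℕ) (t : ℝ) (ht : 0 ≤ t) :
    (∫ τ in (0:ℝ)..t, w τ * (∫ s in (0:ℝ)..τ, w s) ^ n)
      ≤ (∫ s in (0:ℝ)..t, w s) ^ (n + 1) / (n + 1) := by
  classical
  set V : ℝ → ℝ := fun τ => ∫ s in (0:ℝ)..τ, w s with hV
  have hVc : Continuous V := intervalIntegral.continuous_primitive (fun a b => hw a b) 0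
  have hVadd : ∀ a b : ℝ, V b - V a = ∫ s in a..b, w s := by
    intro a b
    have h := intervalIntegral.integral_add_adjacent_intervals (hw 0 a) (hw a b)
    simp only [hV]
    linarith [h]
  have hVmono : ∀ a b : ℝ, a ≤ b → V a ≤ V b := by
    intro a b hab
    have h0 : 0 ≤ ∫ s in a..b, w s := intervalIntegral.integral_nonneg hab (fun s _ => hw0 s)
    have := hVadd a b; linarith
  have hV0 : V 0 = 0 := by simp [hV]
  have hVnn : ∀ a, 0 ≤ a → 0 ≤ V a := fun a ha => hV0 ▸ hVmono 0 a ha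
  have hVtnn : 0 ≤ V t := hVnn t ht
  have hint : ∀ a b : ℝ, IntervalIntegrable (fun τ => w τ * V τ ^ n) volume a b :=
    fun a b => (hw a b).mul_continuousOn ((hVc.pow n).continuousOn)
  have piece : ∀ a b : ℝ, 0 ≤ a → a ≤ b →
      (∫ τ in a..b, w τ * V τ ^ n) ≤ V b ^ n * (V b - V a) := by
    intro a b ha hab
    have hint2 : IntervalIntegrable (fun τ => V b ^ n * w τ) volume a b := (hw a b).const_mul _
    have hm : (∫ τ in a..b, w τ * V τ ^ n) ≤ ∫ τ in a..b, V b ^ n * w τ := by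
      apply integral_mono_on hab (hint a b) hint2
      intro τ hτ
      have h1 : V τ ≤ V b := hVmono τ b hτ.2
      have h2 : 0 ≤ V τ := hVnn τ (le_trans ha hτ.1)
      have h3 := pow_le_pow_left₀ h2 h1 n
      have hw' := hw0 τ
      nlinarith
    calc (∫ τ in a..b, w τ * V τ ^ n) ≤ ∫ τ in a..b, V b ^ n * w τ := hm
      _ = V b ^ n * ∫ τ in a..b, w τ := intervalIntegral.integral_const_mul _ _
      _ = V b ^ n * (V b - V a) := by rw [hVadd]
  have main : ∀ m : ℕ, 1 ≤ m →
      (∫ τ in (0:ℝ)..t, w τ * V τ ^ n)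
        ≤ V t ^ (n + 1) / (n + 1) * (((m : ℝ) + 1) / m) ^ (n + 1) := by
    intro m hm
    have hm' : (0:ℝ) < m := by exact_mod_cast hm
    have step : ∀ (i : ℕ) (τ : ℝ), τ ∈ Set.Icc 0 t → V τ = (min i m : ℕ) * V t / m →
        ∃ τ', τ' ∈ Set.Icc τ t ∧ V τ' = (min (i + 1) m : ℕ) * V t / m := by
      intro i τ hτ hVτ
      have h1 : V τ ≤ (min (i + 1) m : ℕ) * V t / m := by
        rw [hVτ]
        have : ((min i m : ℕ) : ℝ) ≤ ((min (i + 1) m : ℕ) : ℝ) := by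
          exact_mod_cast min_le_min (Nat.le_succ i) le_rfl
        gcongr
      have h2 : ((min (i + 1) m : ℕ) : ℝ) * V t / m ≤ V t := by
        have : ((min (i + 1) m : ℕ) : ℝ) ≤ (m : ℝ) := by exact_mod_cast min_le_right (i+1) m
        rw [div_le_iff₀ hm']
        nlinarith
      have hIVT := intermediate_value_Icc hτ.2 hVc.continuousOn
      obtain ⟨τ', hτ', hVτ'⟩ := hIVT ⟨h1, h2⟩
      exact ⟨τ', hτ', hVτ'⟩
    let T : ℕ → ℝ := fun i => Nat.rec 0 (fun i τ =>
      if h : τ ∈ Set.Icc 0 t ∧ V τ = (min i m : ℕ) * V t / m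
      then (step i τ h.1 h.2).choose else t) i
    have hT0 : T 0 = 0 := rfl
    have inv : ∀ i, T i ∈ Set.Icc 0 t ∧ V (T i) = (min i m : ℕ) * V t / m := by
      intro i; induction i with
      | zero =>
        refine ⟨⟨le_refl 0, ht⟩, ?_⟩
        simp [hT0, hV0]
      | succ i ih =>
        have hTe : T (i + 1) = (step i (T i) ih.1 ih.2).choose := dif_pos ih
        rw [hTe]
        obtain ⟨h1, h2⟩ := (step i (T i) ih.1 ih.2).choose_spec
        exact ⟨⟨le_trans ih.1.1 h1.1, h1.2⟩, h2⟩
    have mono : ∀ i, T i ≤ T (i + 1) := by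
      intro i
      have h := inv i
      have hTe : T (i + 1) = (step i (T i) h.1 h.2).choose := dif_pos h
      rw [hTe]
      exact ((step i (T i) h.1 h.2).choose_spec).1.1
    have hsplit : (∫ τ in (0:ℝ)..t, w τ * V τ ^ n)
        = (∑ i ∈ Finset.range m, ∫ τ in (T i)..(T (i + 1)), w τ * V τ ^ n)
          + ∫ τ in (T m)..t, w τ * V τ ^ n := by
      rw [intervalIntegral.sum_integral_adjacent_intervals (fun i _ => hint _ _), hT0,
        intervalIntegral.integral_add_adjacent_intervals (hint 0 (T m)) (hint (T m) t)]
    have htail : (∫ τ in (T m)..t, w τ * V τ ^ n) ≤ 0 := by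
      have h := piece (T m) t (inv m).1.1 (inv m).1.2
      have hVm : V (T m) = V t := by
        rw [(inv m).2, min_self]
        field_simp
      rw [hVm] at h
      simpa using h
    have hpieces : (∑ i ∈ Finset.range m, ∫ τ in (T i)..(T (i + 1)), w τ * V τ ^ n)
        ≤ ∑ i ∈ Finset.range m, (((i : ℝ) + 1) * (V t / m)) ^ n * (V t / m) := by
      apply Finset.sum_le_sum
      intro i hi
      have him : i + 1 ≤ m := Nat.succ_le_of_lt (Finset.mem_range.1 hi)
      have h := piece (T i) (T (i + 1)) (inv i).1.1 (mono i)
      have e1 : V (T (i + 1)) = ((i : ℝ) + 1) * (V t / m) := by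
        rw [(inv (i + 1)).2, min_eq_left him]
        push_cast
        ring
      have e2 : V (T i) = (i : ℝ) * (V t / m) := by
        rw [(inv i).2, min_eq_left (le_of_lt (Finset.mem_range.1 hi))]
        push_cast
        ring
      rw [e1, e2] at h
      calc (∫ τ in (T i)..(T (i + 1)), w τ * V τ ^ n)
          ≤ (((i : ℝ) + 1) * (V t / m)) ^ n * (((i : ℝ) + 1) * (V t / m) - (i : ℝ) * (V t / m)) := h
        _ = (((i : ℝ) + 1) * (V t / m)) ^ n * (V t / m) := by ring
    have hsum : (∑ i ∈ Finset.range m, (((i : ℝ) + 1) * (V t / m)) ^ n * (V t / m))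
        ≤ V t ^ (n + 1) / (n + 1) * (((m : ℝ) + 1) / m) ^ (n + 1) := by
      have e : (∑ i ∈ Finset.range m, (((i : ℝ) + 1) * (V t / m)) ^ n * (V t / m))
          = (V t / m) ^ (n + 1) * ∑ i ∈ Finset.range m, ((i : ℝ) + 1) ^ n := by
        rw [Finset.mul_sum]
        apply Finset.sum_congr rfl
        intro i _
        rw [mul_pow]
        ring
      rw [e]
      have h := aux_sum_pow n m
      have hVtm : (0:ℝ) ≤ (V t / m) ^ (n + 1) := by positivity
      calc (V t / m) ^ (n + 1) * ∑ i ∈ Finset.range m, ((i : ℝ) + 1) ^ n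
          ≤ (V t / m) ^ (n + 1) * (((m : ℝ) + 1) ^ (n + 1) / (n + 1)) :=
            mul_le_mul_of_nonneg_left h hVtm
        _ = V t ^ (n + 1) / (n + 1) * (((m : ℝ) + 1) / m) ^ (n + 1) := by
            rw [div_pow, div_pow]
            ring
    rw [hsplit]
    calc (∑ i ∈ Finset.range m, ∫ τ in (T i)..(T (i + 1)), w τ * V τ ^ n)
          + ∫ τ in (T m)..t, w τ * V τ ^ n
        ≤ (∑ i ∈ Finset.range m, (((i : ℝ) + 1) * (V t / m)) ^ n * (V t / m)) + 0 :=
          add_le_add hpieces htail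
      _ ≤ V t ^ (n + 1) / (n + 1) * (((m : ℝ) + 1) / m) ^ (n + 1) := by
          rw [add_zero]; exact hsum
  have h1 : Tendsto (fun m : ℕ => ((m : ℝ) + 1) / m) atTop (𝓝 1) := by
    have h2 : Tendsto (fun m : ℕ => 1 + 1 / (m : ℝ)) atTop (𝓝 (1 + 0)) :=
      tendsto_const_nhds.add tendsto_one_div_atTop_nhds_zero_nat
    rw [add_zero] at h2
    apply h2.congr'
    filter_upwards [eventually_ge_atTop 1] with m hm
    have hm' : (0:ℝ) < m := by exact_mod_cast hm
    field_simp
  have tend : Tendsto (fun m : ℕ => V t ^ (n + 1) / (n + 1) * (((m : ℝ) + 1) / m) ^ (n + 1))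
      atTop (𝓝 (V t ^ (n + 1) / (n + 1))) := by
    have := (h1.pow (n + 1)).const_mul (V t ^ (n + 1) / (n + 1))
    simpa using this
  exact ge_of_tendsto tend (eventually_atTop.2 ⟨1, fun m hm => main m hm⟩)


lemma aux_norm_le (x : ℝ → ℂ) (d : ℝ → ℂ) (hx : ∀ τ, HasDerivAt x (d τ) τ)
    (u : ℝ → ℝ) (hu : ∀ t : ℝ, IntervalIntegrable u volume 0 t)
    (ρ g : ℝ → ℝ) (hρ : Continuous ρ) (hg : Continuous g) (hg0 : ∀ τ, 0 ≤ g τ)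
    (hd : ∀ τ, ((starRingEnd ℂ) (x τ) * d τ).re = u τ * ρ τ)
    (hρle : ∀ τ, |ρ τ| ≤ ‖x τ‖ * g τ) (t : ℝ) (ht : 0 ≤ t) :
    ‖x t‖ ≤ ‖x 0‖ + ∫ τ in (0:ℝ)..t, |u τ| * g τ := by
  have hxc : Continuous x := continuous_iff_continuousAt.2 fun τ => (hx τ).continuousAt
  have hGint : IntervalIntegrable (fun τ => |u τ| * g τ) volume 0 t :=
    (hu t).abs.mul_continuousOn hg.continuousOn
  apply le_of_forall_pos_le_add
  intro ε hε
  set q : ℝ → ℝ := fun s => ‖x s‖ ^ 2 + ε ^ 2 with hqdef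
  have hqc : Continuous q := ((hxc.norm.pow 2).add continuous_const)
  have hqpos : ∀ τ, 0 < q τ := fun τ => by positivity
  have hsq : ∀ τ, ‖x τ‖ ≤ Real.sqrt (q τ) := by
    intro τ
    rw [show ‖x τ‖ = Real.sqrt (‖x τ‖ ^ 2) from (Real.sqrt_sq (norm_nonneg _)).symm]
    apply Real.sqrt_le_sqrt
    simp only [hqdef]
    nlinarith
  have hsqpos : ∀ τ, 0 < Real.sqrt (q τ) := fun τ => Real.sqrt_pos.2 (hqpos τ)
  have hq : ∀ τ, HasDerivAt q (2 * (u τ * ρ τ)) τ := by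
    intro τ
    have hre : HasDerivAt (fun s => (x s).re) ((d τ).re) τ :=
      Complex.reCLM.hasFDerivAt.comp_hasDerivAt τ (hx τ)
    have him : HasDerivAt (fun s => (x s).im) ((d τ).im) τ :=
      Complex.imCLM.hasFDerivAt.comp_hasDerivAt τ (hx τ)
    have h1 : HasDerivAt (fun s => (x s).re * (x s).re + (x s).im * (x s).im + ε ^ 2)
        ((d τ).re * (x τ).re + (x τ).re * (d τ).re
          + ((d τ).im * (x τ).im + (x τ).im * (d τ).im)) τ :=
      ((hre.mul hre).add (him.mul him)).add_const _
    have hfe : (fun s => (x s).re * (x s).re + (x s).im * (x s).im + ε ^ 2) = q := by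
      funext s
      simp only [hqdef]
      rw [show ‖x s‖ ^ 2 = ((x s).re * (x s).re + (x s).im * (x s).im) by
        rw [← Complex.normSq_apply, Complex.sq_norm]]
    rw [hfe] at h1
    have hval : (d τ).re * (x τ).re + (x τ).re * (d τ).re
        + ((d τ).im * (x τ).im + (x τ).im * (d τ).im) = 2 * (u τ * ρ τ) := by
      rw [← hd τ]
      simp only [Complex.mul_re, Complex.conj_re, Complex.conj_im]
      ring
    rw [hval] at h1
    exact h1
  set f : ℝ → ℝ := fun s => Real.sqrt (q s) with hfdef
  set F : ℝ → ℝ := fun τ => u τ * (ρ τ / Real.sqrt (q τ)) with hFdef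
  have hf : ∀ τ, HasDerivAt f (F τ) τ := by
    intro τ
    have h := (hq τ).sqrt (ne_of_gt (hqpos τ))
    have : 2 * (u τ * ρ τ) / (2 * Real.sqrt (q τ)) = F τ := by
      rw [hFdef]
      field_simp
    rwa [this] at h
  have hFint : IntervalIntegrable F volume 0 t := by
    apply (hu t).mul_continuousOn
    exact (hρ.div (Real.continuous_sqrt.comp hqc) fun τ => (hsqpos τ).ne').continuousOn
  have hFTC : ∫ τ in (0:ℝ)..t, F τ = f t - f 0 :=
    integral_eq_sub_of_hasDerivAt (fun τ _ => hf τ) hFint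
  have hmono : ∫ τ in (0:ℝ)..t, F τ ≤ ∫ τ in (0:ℝ)..t, |u τ| * g τ := by
    apply integral_mono_on ht hFint hGint
    intro τ _
    have h1 : |ρ τ| / Real.sqrt (q τ) ≤ g τ := by
      rw [div_le_iff₀ (hsqpos τ)]
      calc |ρ τ| ≤ ‖x τ‖ * g τ := hρle τ
        _ ≤ Real.sqrt (q τ) * g τ := mul_le_mul_of_nonneg_right (hsq τ) (hg0 τ)
        _ = g τ * Real.sqrt (q τ) := mul_comm _ _
    calc F τ ≤ |F τ| := le_abs_self _
      _ = |u τ| * (|ρ τ| / Real.sqrt (q τ)) := by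
          rw [hFdef]
          rw [abs_mul, abs_div, abs_of_pos (hsqpos τ)]
      _ ≤ |u τ| * g τ := mul_le_mul_of_nonneg_left h1 (abs_nonneg _)
  have hf0 : f 0 ≤ ‖x 0‖ + ε := by
    rw [hfdef]
    have : q 0 ≤ (‖x 0‖ + ε) ^ 2 := by
      simp only [hqdef]
      nlinarith [norm_nonneg (x 0)]
    calc Real.sqrt (q 0) ≤ Real.sqrt ((‖x 0‖ + ε) ^ 2) := Real.sqrt_le_sqrt this
      _ = ‖x 0‖ + ε := Real.sqrt_sq (by positivity)
  calc ‖x t‖ ≤ f t := hsq t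
    _ = f 0 + ∫ τ in (0:ℝ)..t, F τ := by rw [hFTC]; ring
    _ ≤ (‖x 0‖ + ε) + ∫ τ in (0:ℝ)..t, |u τ| * g τ := add_le_add hf0 hmono
    _ = ‖x 0‖ + (∫ τ in (0:ℝ)..t, |u τ| * g τ) + ε := by ring


/-- Tridiagonal growth bound: if A is skew-adjoint diagonal in the basis (φ_k) and B is
skew-adjoint, tridiagonal with entries of modulus ≤ 1/2, then the transition amplitude
from level 1 to level k+1 satisfies |⟨φ_{k+1}, Υ^u_t φ_1⟩| ≤ (∫₀^t|u|)^k / k!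
(0-based indexing: `φ 0` is the first eigenvector φ_1). -/
theorem stmt16 {H : Type*} [NormedAddCommGroup H] [InnerProductSpace ℂ H] [CompleteSpace H]
    (A : H →ₗ.[ℂ] H) (hdense : Dense (A.domain : Set H)) (hAskew : A.adjoint = -A)
    (φ : HilbertBasis ℕ ℂ H) (lam : ℕ → ℝ)
    (hmem : ∀ k, (φ k : H) ∈ A.domain)
    (hAφ : ∀ k, A ⟨φ k, hmem k⟩ = (-(lam k : ℂ) * Complex.I) • (φ k : H))
    (B : H →L[ℂ] H) (hBskew : ContinuousLinearMap.adjoint B = -B)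
    (htri : ∀ j k : ℕ, 1 < |(j:ℤ) - k| → ⟪(φ j : H), B (φ k)⟫_ℂ = 0)
    (hhalf : ∀ j k : ℕ, ‖⟪(φ j : H), B (φ k)⟫_ℂ‖ ≤ 1 / 2)
    (u : ℝ → ℝ) (hu : ∀ t : ℝ, IntervalIntegrable u volume 0 t)
    (ψ : ℝ → H) (hinit : ψ 0 = φ 0)
    (hmemψ : ∀ t, ψ t ∈ A.domain)
    (hode : ∀ t, HasDerivAt ψ (A ⟨ψ t, hmemψ t⟩ + u t • B (ψ t)) t) :
    ∀ t : ℝ, 0 ≤ t → ∀ k : ℕ,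
      ‖⟪(φ k : H), ψ t⟫_ℂ‖ ≤ (1 / (Nat.factorial k : ℝ)) * (∫ τ in (0:ℝ)..t, |u τ|) ^ k := by
  classical
  have hψc : Continuous ψ := continuous_iff_continuousAt.2 fun τ => (hode τ).continuousAt
  set x : ℕ → ℝ → ℂ := fun k t => ⟪(φ k : H), ψ t⟫_ℂ with hxdef
  set b : ℕ → ℝ → ℂ := fun k t => ⟪(φ k : H), B (ψ t)⟫_ℂ with hbdef
  have hxc : ∀ k, Continuous (x k) := fun k => Continuous.inner continuous_const hψc
  have hbc : ∀ k, Continuous (b k) :=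
    fun k => Continuous.inner continuous_const (B.continuous.comp hψc)
  -- adjointness facts
  have hAdj : (-A).IsFormalAdjoint A := by
    rw [← hAskew]; exact A.adjoint_isFormalAdjoint hdense
  have hA_inner : ∀ (v : H) (hv : v ∈ A.domain) (w : H) (hw : w ∈ A.domain),
      ⟪v, A ⟨w, hw⟩⟫_ℂ = -⟪(A ⟨v, hv⟩ : H), w⟫_ℂ := by
    intro v hv w hw
    have h := hAdj ⟨v, hv⟩ ⟨w, hw⟩
    rw [LinearPMap.neg_apply, inner_neg_left] at h
    exact h.symm
  have hB_inner : ∀ v w : H, ⟪v, B w⟫_ℂ = -⟪B v, w⟫_ℂ := by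
    intro v w
    have h := ContinuousLinearMap.adjoint_inner_left B w v
    rw [hBskew, ContinuousLinearMap.neg_apply, inner_neg_left] at h
    exact h.symm
  have hAterm : ∀ k t, ⟪(φ k : H), A ⟨ψ t, hmemψ t⟩⟫_ℂ = (-(lam k : ℂ) * Complex.I) * x k t := by
    intro k t
    rw [hA_inner _ (hmem k) _ (hmemψ t), hAφ k, inner_smul_left]
    simp only [map_mul, map_neg, Complex.conj_I, Complex.conj_ofReal]
    ring_nf
    rfl
  -- derivative of x k
  have hx' : ∀ k t, HasDerivAt (x k)
      ((-(lam k : ℂ) * Complex.I) * x k t + (u t : ℂ) * b k t) t := by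
    intro k t
    have h0 := ((innerSL ℂ ((φ k : H))).hasFDerivAt.restrictScalars ℝ).comp_hasDerivAt t (hode t)
    have h1 : ((innerSL ℂ ((φ k : H))).restrictScalars ℝ) (A ⟨ψ t, hmemψ t⟩ + u t • B (ψ t))
        = (-(lam k : ℂ) * Complex.I) * x k t + (u t : ℂ) * b k t := by
      simp only [ContinuousLinearMap.coe_restrictScalars', innerSL_apply_apply]
      rw [inner_add_right, hAterm k t, RCLike.real_smul_eq_coe_smul (K := ℂ), inner_smul_right]
      rfl
    rw [h1] at h0
    exact h0
  -- norm preservation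
  have hre0A : ∀ t, (⟪ψ t, A ⟨ψ t, hmemψ t⟩⟫_ℂ).re = 0 := by
    intro t
    have h := hA_inner (ψ t) (hmemψ t) (ψ t) (hmemψ t)
    have h2 : ⟪(A ⟨ψ t, hmemψ t⟩ : H), ψ t⟫_ℂ = (starRingEnd ℂ) ⟪ψ t, A ⟨ψ t, hmemψ t⟩⟫_ℂ := by
      rw [inner_conj_symm]
    rw [h2] at h
    have := congrArg Complex.re h
    simp only [Complex.neg_re, Complex.conj_re] at this
    linarith
  have hre0B : ∀ t, (⟪ψ t, B (ψ t)⟫_ℂ).re = 0 := by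
    intro t
    have h := hB_inner (ψ t) (ψ t)
    have h2 : ⟪B (ψ t), ψ t⟫_ℂ = (starRingEnd ℂ) ⟪ψ t, B (ψ t)⟫_ℂ := by rw [inner_conj_symm]
    rw [h2] at h
    have := congrArg Complex.re h
    simp only [Complex.neg_re, Complex.conj_re] at this
    linarith
  have hψnorm : ∀ t, ‖ψ t‖ = 1 := by
    letI : InnerProductSpace ℝ H := InnerProductSpace.complexToReal
    have hinner_re : ∀ v w : H, (⟪v, w⟫_ℝ : ℝ) = (⟪v, w⟫_ℂ).re := fun v w => rfl
    set P : ℝ → ℝ := fun t => ⟪ψ t, ψ t⟫_ℝ with hPdef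
    have hPd : ∀ t, HasDerivAt P 0 t := by
      intro t
      have h := HasDerivAt.inner ℝ (hode t) (hode t)
      have h1 : (⟪ψ t, A ⟨ψ t, hmemψ t⟩ + u t • B (ψ t)⟫_ℂ).re = 0 := by
        have h3 : (⟪ψ t, u t • B (ψ t)⟫_ℂ) = (u t : ℂ) * ⟪ψ t, B (ψ t)⟫_ℂ := by
          rw [RCLike.real_smul_eq_coe_smul (K := ℂ), inner_smul_right]
          rfl
        rw [inner_add_right, Complex.add_re, h3, hre0A t]
        simp only [Complex.mul_re, Complex.ofReal_re, Complex.ofReal_im, hre0B t]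
        ring
      have hval : (⟪ψ t, A ⟨ψ t, hmemψ t⟩ + u t • B (ψ t)⟫_ℝ : ℝ)
          + ⟪(A ⟨ψ t, hmemψ t⟩ + u t • B (ψ t) : H), ψ t⟫_ℝ = 0 := by
        rw [hinner_re, hinner_re]
        have hsym : (⟪(A ⟨ψ t, hmemψ t⟩ + u t • B (ψ t) : H), ψ t⟫_ℂ).re
            = (⟪ψ t, A ⟨ψ t, hmemψ t⟩ + u t • B (ψ t)⟫_ℂ).re := by
          rw [← inner_conj_symm (ψ t)]
          exact Complex.conj_re _
        rw [hsym, h1]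
        ring
      rw [hval] at h
      exact h
    have hPconst : ∀ t, P t = P 0 := by
      intro t
      exact is_const_of_deriv_eq_zero (fun s => (hPd s).differentiableAt)
        (fun s => (hPd s).deriv) t 0
    intro t
    have h1 : ‖ψ t‖ ^ 2 = ‖ψ 0‖ ^ 2 := by
      rw [← real_inner_self_eq_norm_sq, ← real_inner_self_eq_norm_sq]
      exact hPconst t
    have h2 : ‖ψ 0‖ = 1 := by rw [hinit]; exact φ.orthonormal.1 0
    rw [h2] at h1
    nlinarith [norm_nonneg (ψ t)]
  have hbound : ∀ k t, ‖x k t‖ ≤ 1 := by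
    intro k t
    calc ‖x k t‖ ≤ ‖(φ k : H)‖ * ‖ψ t‖ := norm_inner_le_norm _ _
      _ = 1 := by rw [hψnorm t, φ.orthonormal.1 k, one_mul]
  -- expansion of b (k+1)
  have hexp : ∀ k t, b (k + 1) t
      = -∑ j ∈ ({k, k + 1, k + 2} : Finset ℕ), ⟪B (φ (k + 1) : H), (φ j : H)⟫_ℂ * x j t := by
    intro k t
    have h1 : b (k + 1) t = -⟪B (φ (k + 1) : H), ψ t⟫_ℂ := by
      rw [hbdef]; exact hB_inner _ _
    rw [h1, ← φ.tsum_inner_mul_inner (B (φ (k + 1) : H)) (ψ t)]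
    congr 1
    apply tsum_eq_sum
    intro j hj
    have hj3 : j ≠ k ∧ j ≠ k + 1 ∧ j ≠ k + 2 := by
      simpa [Finset.mem_insert] using hj
    have htri' : ⟪(φ j : H), B (φ (k + 1) : H)⟫_ℂ = 0 := by
      apply htri
      rw [lt_abs]
      push_cast
      omega
    have : ⟪B (φ (k + 1) : H), (φ j : H)⟫_ℂ = 0 := by
      rw [← inner_conj_symm, htri', map_zero]
    rw [this, zero_mul]
  -- the ρ bound
  have hdiag : ∀ k : ℕ, (⟪B (φ k : H), (φ k : H)⟫_ℂ).re = 0 := by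
    intro k
    have h := hB_inner (φ k : H) (φ k : H)
    have h2 : ⟪(φ k : H), B (φ k : H)⟫_ℂ = (starRingEnd ℂ) ⟪B (φ k : H), (φ k : H)⟫_ℂ := by
      rw [inner_conj_symm]
    rw [h2] at h
    have := congrArg Complex.re h
    simp only [Complex.conj_re, Complex.neg_re] at this
    linarith
  have hρle : ∀ k t, |((starRingEnd ℂ) (x (k + 1) t) * b (k + 1) t).re|
      ≤ ‖x (k + 1) t‖ * ((1 / 2) * (‖x k t‖ + ‖x (k + 2) t‖)) := by
    intro k t
    rw [hexp k t]
    have hsum : ∑ j ∈ ({k, k + 1, k + 2} : Finset ℕ), ⟪B (φ (k + 1) : H), (φ j : H)⟫_ℂ * x j t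
        = ⟪B (φ (k + 1) : H), (φ k : H)⟫_ℂ * x k t
          + ⟪B (φ (k + 1) : H), (φ (k + 1) : H)⟫_ℂ * x (k + 1) t
          + ⟪B (φ (k + 1) : H), (φ (k + 2) : H)⟫_ℂ * x (k + 2) t := by
      rw [show ({k, k + 1, k + 2} : Finset ℕ) = insert k (insert (k + 1) {k + 2}) from rfl]
      rw [Finset.sum_insert (by simp), Finset.sum_insert (by simp), Finset.sum_singleton]
      ring
    rw [hsum]
    set c0 := ⟪B (φ (k + 1) : H), (φ k : H)⟫_ℂ
    set c1 := ⟪B (φ (k + 1) : H), (φ (k + 1) : H)⟫_ℂ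
    set c2 := ⟪B (φ (k + 1) : H), (φ (k + 2) : H)⟫_ℂ
    set z := x (k + 1) t
    have hdre : ((starRingEnd ℂ) z * -(c0 * x k t + c1 * z + c2 * x (k + 2) t)).re
        = -((c0 * ((starRingEnd ℂ) z * x k t)).re + (c2 * ((starRingEnd ℂ) z * x (k + 2) t)).re
            + (c1 * ((starRingEnd ℂ) z * z)).re) := by
      have : (starRingEnd ℂ) z * -(c0 * x k t + c1 * z + c2 * x (k + 2) t)
          = -(c0 * ((starRingEnd ℂ) z * x k t) + c2 * ((starRingEnd ℂ) z * x (k + 2) t)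
              + c1 * ((starRingEnd ℂ) z * z)) := by ring
      rw [this]
      simp [Complex.add_re]
    rw [hdre]
    have hc1 : (c1 * ((starRingEnd ℂ) z * z)).re = 0 := by
      have hz : (starRingEnd ℂ) z * z = ((Complex.normSq z : ℝ) : ℂ) := by
        rw [mul_comm, Complex.mul_conj]
      rw [hz]
      simp only [Complex.mul_re, Complex.ofReal_re, Complex.ofReal_im, mul_zero, sub_zero]
      have : c1.re = 0 := hdiag (k + 1) ▸ rfl
      rw [this, zero_mul]
    rw [hc1, add_zero]
    have hnc : ∀ j : ℕ, ‖⟪B (φ (k + 1) : H), (φ j : H)⟫_ℂ‖ ≤ 1 / 2 := by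
      intro j
      rw [← inner_conj_symm, RCLike.norm_conj]
      exact hhalf j (k + 1)
    have habs : ∀ (c : ℂ) (j : ℕ), ‖c‖ ≤ 1 / 2 →
        |(c * ((starRingEnd ℂ) z * x j t)).re| ≤ 1 / 2 * (‖z‖ * ‖x j t‖) := by
      intro c j hc
      calc |(c * ((starRingEnd ℂ) z * x j t)).re| ≤ ‖c * ((starRingEnd ℂ) z * x j t)‖ :=
            Complex.abs_re_le_norm _
        _ = ‖c‖ * (‖z‖ * ‖x j t‖) := by
            rw [norm_mul, norm_mul, RCLike.norm_conj]
        _ ≤ 1 / 2 * (‖z‖ * ‖x j t‖) := by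
            apply mul_le_mul_of_nonneg_right hc
            positivity
    calc |(-((c0 * ((starRingEnd ℂ) z * x k t)).re + (c2 * ((starRingEnd ℂ) z * x (k + 2) t)).re))|
        ≤ |(c0 * ((starRingEnd ℂ) z * x k t)).re| + |(c2 * ((starRingEnd ℂ) z * x (k + 2) t)).re| := by
          rw [abs_neg]; exact abs_add_le _ _
      _ ≤ 1 / 2 * (‖z‖ * ‖x k t‖) + 1 / 2 * (‖z‖ * ‖x (k + 2) t‖) :=
          add_le_add (habs c0 k (hnc k)) (habs c2 (k + 2) (hnc (k + 2)))
      _ = ‖z‖ * (1 / 2 * (‖x k t‖ + ‖x (k + 2) t‖)) := by ring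
  -- the integral step
  have hUint : ∀ a c : ℝ, IntervalIntegrable (fun s => |u s|) volume a c :=
    fun a c => ((hu a).symm.trans (hu c)).abs
  have hUc : Continuous (fun τ => ∫ s in (0:ℝ)..τ, |u s|) :=
    intervalIntegral.continuous_primitive (fun a c => hUint a c) 0
  have hstep : ∀ k t, 0 ≤ t → ‖x (k + 1) t‖ ≤ ‖x (k + 1) 0‖
      + ∫ τ in (0:ℝ)..t, |u τ| * ((1 / 2) * (‖x k τ‖ + ‖x (k + 2) τ‖)) := by
    intro k t ht
    apply aux_norm_le (x (k + 1))
      (fun τ => (-(lam (k + 1) : ℂ) * Complex.I) * x (k + 1) τ + (u τ : ℂ) * b (k + 1) τ)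
      (fun τ => hx' (k + 1) τ) u hu
      (fun τ => ((starRingEnd ℂ) (x (k + 1) τ) * b (k + 1) τ).re)
      (fun τ => (1 / 2) * (‖x k τ‖ + ‖x (k + 2) τ‖))
    · exact Complex.continuous_re.comp ((continuous_star.comp (hxc (k + 1))).mul (hbc (k + 1)))
    · exact (continuous_const.mul ((hxc k).norm.add ((hxc (k + 2)).norm)))
    · intro τ; positivity
    · intro τ
      set z := x (k + 1) τ
      have h1 : (starRingEnd ℂ) z * ((-(lam (k + 1) : ℂ) * Complex.I) * z + (u τ : ℂ) * b (k + 1) τ)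
          = (-(lam (k + 1) : ℂ) * Complex.I) * ((starRingEnd ℂ) z * z)
            + (u τ : ℂ) * ((starRingEnd ℂ) z * b (k + 1) τ) := by ring
      rw [h1]
      have hz : (starRingEnd ℂ) z * z = ((Complex.normSq z : ℝ) : ℂ) := by
        rw [mul_comm, Complex.mul_conj]
      rw [hz]
      simp only [Complex.add_re, Complex.mul_re, Complex.ofReal_re, Complex.ofReal_im,
        Complex.neg_re, Complex.neg_im, Complex.I_re, Complex.I_im, Complex.mul_im]
      ring
    · intro τ; exact hρle k τ
    · exact ht
  -- main induction
  have hmain : ∀ n k, n ≤ k → ∀ t, 0 ≤ t →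
      ‖x k t‖ ≤ (∫ τ in (0:ℝ)..t, |u τ|) ^ n / (Nat.factorial n : ℝ) := by
    intro n
    induction n with
    | zero => intro k _ t _; simpa using hbound k t
    | succ n ih =>
      intro k hk t ht
      obtain ⟨k', rfl⟩ : ∃ k', k = k' + 1 := ⟨k - 1, by omega⟩
      have h0 : x (k' + 1) 0 = 0 := by
        simp only [hxdef]
        rw [hinit]
        exact φ.orthonormal.2 (by omega : k' + 1 ≠ 0)
      have hstep' := hstep k' t ht
      rw [h0, norm_zero, zero_add] at hstep'
      have hint1 : IntervalIntegrable
          (fun τ => |u τ| * ((1 / 2) * (‖x k' τ‖ + ‖x (k' + 2) τ‖))) volume 0 t :=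
        (hUint 0 t).mul_continuousOn
          (continuous_const.mul ((hxc k').norm.add ((hxc (k' + 2)).norm))).continuousOn
      have hint2 : IntervalIntegrable
          (fun τ => |u τ| * ((∫ s in (0:ℝ)..τ, |u s|) ^ n / (Nat.factorial n : ℝ))) volume 0 t :=
        (hUint 0 t).mul_continuousOn ((hUc.pow n).div_const _).continuousOn
      have hmono : (∫ τ in (0:ℝ)..t, |u τ| * ((1 / 2) * (‖x k' τ‖ + ‖x (k' + 2) τ‖)))
          ≤ ∫ τ in (0:ℝ)..t, |u τ| * ((∫ s in (0:ℝ)..τ, |u s|) ^ n / (Nat.factorial n : ℝ)) := by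
        apply integral_mono_on ht hint1 hint2
        intro τ hτ
        have ih1 := ih k' (by omega) τ hτ.1
        have ih2 := ih (k' + 2) (by omega) τ hτ.1
        have : (1 / 2) * (‖x k' τ‖ + ‖x (k' + 2) τ‖)
            ≤ (∫ s in (0:ℝ)..τ, |u s|) ^ n / (Nat.factorial n : ℝ) := by linarith
        exact mul_le_mul_of_nonneg_left this (abs_nonneg _)
      have hiter : (∫ τ in (0:ℝ)..t, |u τ| * ((∫ s in (0:ℝ)..τ, |u s|) ^ n / (Nat.factorial n : ℝ)))
          ≤ (∫ τ in (0:ℝ)..t, |u τ|) ^ (n + 1) / (Nat.factorial (n + 1) : ℝ) := by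
        have e : ∀ τ : ℝ, |u τ| * ((∫ s in (0:ℝ)..τ, |u s|) ^ n / (Nat.factorial n : ℝ))
            = (1 / (Nat.factorial n : ℝ)) * (|u τ| * (∫ s in (0:ℝ)..τ, |u s|) ^ n) := by
          intro τ; ring
        rw [intervalIntegral.integral_congr (fun τ _ => e τ), intervalIntegral.integral_const_mul]
        have h2 := aux_iter (fun s => |u s|) hUint (fun s => abs_nonneg _) n t ht
        have hfn : (0:ℝ) < (Nat.factorial n : ℝ) := by positivity
        calc (1 / (Nat.factorial n : ℝ)) * ∫ τ in (0:ℝ)..t, |u τ| * (∫ s in (0:ℝ)..τ, |u s|) ^ n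
            ≤ (1 / (Nat.factorial n : ℝ)) * ((∫ s in (0:ℝ)..t, |u s|) ^ (n + 1) / (n + 1)) := by
              apply mul_le_mul_of_nonneg_left h2
              positivity
          _ = (∫ τ in (0:ℝ)..t, |u τ|) ^ (n + 1) / (Nat.factorial (n + 1) : ℝ) := by
              rw [Nat.factorial_succ]
              push_cast
              rw [div_mul_div_comm, one_mul, mul_comm (Nat.factorial n : ℝ) ((n:ℝ) + 1)]
      calc ‖x (k' + 1) t‖ ≤ _ := hstep'
        _ ≤ _ := hmono
        _ ≤ _ := hiter
  intro t ht k
  calc ‖x k t‖ ≤ (∫ τ in (0:ℝ)..t, |u τ|) ^ k / (Nat.factorial k : ℝ) := hmain k k le_rfl t ht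
    _ = (1 / (Nat.factorial k : ℝ)) * (∫ τ in (0:ℝ)..t, |u τ|) ^ k := by ring
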